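/- arXiv:1411.5295 — 2 statements merged into one kernel-verified Lean document; each statement's English description precedes it below -/
import Mathlib

section
/- The area of the set U = {(x,y) ∈ ℝ² : max(x·log 2 + y·log 3, 0) + max(-x·log 2, 0) + max(-y·log 3, 0) ≤ 1} equals 3/((log 2)(log 3)). -/
open Real MeasureTheory

lemma hex_iff (u v : ℝ) :
    max (u + v) 0 + max (-u) 0 + max (-v) 0 ≤ 1 ↔
      |u| ≤ 1 ∧ -1 - min u 0 ≤ v ∧ v ≤ 1 - max u 0 := by
  rcases le_total u 0 with hu | hu <;> rcases le_total v 0 with hv | hv <;>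
    rcases le_total (u + v) 0 with huv | huv <;>
      simp only [abs_le, max_eq_left, max_eq_right, min_eq_left, min_eq_right,
        neg_nonneg, neg_nonpos, *, max_eq_left_iff, max_eq_right_iff] <;>
      constructor <;> intro h <;>
      first
        | (exact ⟨⟨by linarith, by linarith⟩, by linarith, by linarith⟩)
        | (obtain ⟨⟨h1, h2⟩, h3, h4⟩ := h; linarith)

lemma int_lin (A B d l r : ℝ) :
    ∫ x in l..r, (A + x * B) / d = ((r - l) * A + (r ^ 2 - l ^ 2) / 2 * B) / d := by
  have hint : IntervalIntegrable (fun x : ℝ => x * B) volume l r :=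
    (continuous_id.mul continuous_const).intervalIntegrable _ _
  rw [intervalIntegral.integral_div,
    intervalIntegral.integral_add intervalIntegrable_const hint,
    intervalIntegral.integral_const, intervalIntegral.integral_mul_const, integral_id]
  simp [smul_eq_mul]; try ring

theorem times2times3_unit_ball_area :
    volume {p : ℝ × ℝ |
        max (p.1 * Real.log 2 + p.2 * Real.log 3) 0 + max (-(p.1 * Real.log 2)) 0
          + max (-(p.2 * Real.log 3)) 0 ≤ 1}
      = ENNReal.ofReal (3 / (Real.log 2 * Real.log 3)) := by
  have ha : (0:ℝ) < Real.log 2 := Real.log_pos one_lt_two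
  have hb : (0:ℝ) < Real.log 3 := Real.log_pos (by norm_num)
  set a := Real.log 2 with hA
  set b := Real.log 3 with hB
  set S : Set (ℝ × ℝ) :=
    {p : ℝ × ℝ | max (p.1 * a + p.2 * b) 0 + max (-(p.1 * a)) 0 + max (-(p.2 * b)) 0 ≤ 1}
    with hS
  have hmeas : MeasurableSet S := by
    apply measurableSet_le _ measurable_const
    fun_prop
  set c : ℝ := 1 / a with hc
  have hc0 : 0 < c := by positivity
  have habs : ∀ x : ℝ, (|x * a| ≤ 1 ↔ x ∈ Set.Icc (-c) c) := by
    intro x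
    rw [abs_mul, abs_of_pos ha, Set.mem_Icc, ← abs_le, hc, le_div_iff₀ ha]
  have hslice : ∀ x : ℝ, Prod.mk x ⁻¹' S =
      if |x * a| ≤ 1 then Set.Icc ((-1 - min (x*a) 0)/b) ((1 - max (x*a) 0)/b) else ∅ := by
    intro x
    ext y
    simp only [Set.mem_preimage, hS, Set.mem_setOf_eq, hex_iff (x*a) (y*b)]
    split_ifs with hx
    · simp only [Set.mem_Icc, div_le_iff₀ hb, le_div_iff₀ hb, hx, true_and]
    · simp [hx, -abs_mul]
  have hlen : ∀ u : ℝ, (1 - max u 0)/b - (-1 - min u 0)/b = (2 - |u|)/b := by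
    intro u
    rcases le_total u 0 with h | h <;>
      simp [max_eq_right, max_eq_left, min_eq_left, min_eq_right, abs_of_nonpos,
        abs_of_nonneg, h] <;> ring
  have key : ∫ x in Set.Icc (-c) c, (2 - |x * a|) / b = 3 / (a * b) := by
    rw [MeasureTheory.integral_Icc_eq_integral_Ioc,
        ← intervalIntegral.integral_of_le (by linarith : -c ≤ c),
        ← intervalIntegral.integral_add_adjacent_intervals (b := 0)
          ((Continuous.intervalIntegrable (by fun_prop) _ _))
          ((Continuous.intervalIntegrable (by fun_prop) _ _))]
    have h1 : ∫ x in (-c)..(0:ℝ), (2 - |x * a|) / b = ∫ x in (-c)..(0:ℝ), (2 + x * a) / b := by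
      apply intervalIntegral.integral_congr
      intro x hx
      rw [Set.uIcc_of_le (by linarith)] at hx
      show (2 - |x * a|) / b = (2 + x * a) / b
      rw [abs_of_nonpos (mul_nonpos_of_nonpos_of_nonneg hx.2 ha.le)]
      ring_nf
    have h2 : ∫ x in (0:ℝ)..c, (2 - |x * a|) / b = ∫ x in (0:ℝ)..c, (2 + x * (-a)) / b := by
      apply intervalIntegral.integral_congr
      intro x hx
      rw [Set.uIcc_of_le (by linarith)] at hx
      show (2 - |x * a|) / b = (2 + x * -a) / b
      rw [abs_of_nonneg (mul_nonneg hx.1 ha.le)]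
      ring_nf
    rw [h1, h2, int_lin, int_lin, hc]
    field_simp
    ring
  calc volume S = ∫⁻ x, volume (Prod.mk x ⁻¹' S) := by
        rw [Measure.volume_eq_prod, Measure.prod_apply hmeas]
    _ = ∫⁻ x, (Set.Icc (-c) c).indicator
          (fun x => ENNReal.ofReal ((2 - |x * a|) / b)) x := by
        refine lintegral_congr fun x => ?_
        rw [hslice x, Set.indicator_apply]
        by_cases hx : |x * a| ≤ 1
        · rw [if_pos hx, if_pos ((habs x).1 hx), Real.volume_Icc, hlen]
        · rw [if_neg hx, if_neg (fun h => hx ((habs x).2 h)), measure_empty]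
    _ = ∫⁻ x in Set.Icc (-c) c, ENNReal.ofReal ((2 - |x * a|) / b) := by
        rw [lintegral_indicator measurableSet_Icc]
    _ = ENNReal.ofReal (∫ x in Set.Icc (-c) c, (2 - |x * a|) / b) := by
        rw [← ofReal_integral_eq_lintegral_ofReal]
        · exact (Continuous.integrableOn_Icc (by fun_prop))
        · refine (ae_restrict_iff' measurableSet_Icc).2 (ae_of_all _ fun x hx => ?_)
          have h1 : |x * a| ≤ 1 := (habs x).2 hx
          simpa [-abs_mul] using div_nonneg (by linarith) hb.le
    _ = ENNReal.ofReal (3 / (a * b)) := by rw [key]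
end

section
/- The area of the set U = {(x,y) ∈ ℝ² : max((x+y)·log 2, 0) + max(-x·log 2, 0) + max(-y·log 2, 0) ≤ 1} equals 3/(log 2)². -/
open Real MeasureTheory

theorem ledrappier_unit_ball_area :
    volume {p : ℝ × ℝ |
        max ((p.1 + p.2) * Real.log 2) 0 + max (-(p.1 * Real.log 2)) 0
          + max (-(p.2 * Real.log 2)) 0 ≤ 1}
      = ENNReal.ofReal (3 / (Real.log 2) ^ 2) := by
  set L := Real.log 2 with hLdef
  have hL : 0 < L := Real.log_pos one_lt_two
  set c : ℝ := L⁻¹ with hcdef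
  have hc : 0 < c := inv_pos.2 hL
  have hcL : c * L = 1 := inv_mul_cancel₀ hL.ne'
  -- key characterization
  have key : ∀ x y : ℝ,
      (max ((x + y) * L) 0 + max (-(x * L)) 0 + max (-(y * L)) 0 ≤ 1) ↔
      (x ∈ Set.Icc (-c) c ∧ y ∈ Set.Icc (-c + max (-x) 0) (c - max x 0)) := by
    intro x y
    have h1 : max ((x + y) * L) 0 = max (x + y) 0 * L := by
      rw [max_mul_of_nonneg _ _ hL.le, zero_mul]
    have h2 : max (-(x * L)) 0 = max (-x) 0 * L := by
      rw [max_mul_of_nonneg _ _ hL.le, zero_mul, neg_mul]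
    have h3 : max (-(y * L)) 0 = max (-y) 0 * L := by
      rw [max_mul_of_nonneg _ _ hL.le, zero_mul, neg_mul]
    rw [h1, h2, h3, ← add_mul, ← add_mul, ← hcL, mul_le_mul_iff_of_pos_right hL]
    simp only [Set.mem_Icc, max_def]
    split_ifs with ha hb hd <;>
      exact ⟨fun h => ⟨⟨by linarith, by linarith⟩, by linarith, by linarith⟩,
        fun h => by obtain ⟨⟨h1, h2⟩, h3, h4⟩ := h; linarith⟩
  have hmeas : MeasurableSet {p : ℝ × ℝ |
      max ((p.1 + p.2) * L) 0 + max (-(p.1 * L)) 0 + max (-(p.2 * L)) 0 ≤ 1} := by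
    apply IsClosed.measurableSet
    apply isClosed_le _ continuous_const
    fun_prop
  rw [Measure.volume_eq_prod ℝ ℝ, Measure.prod_apply hmeas]
  have hsec : ∀ x : ℝ, (volume (Prod.mk x ⁻¹' {p : ℝ × ℝ |
      max ((p.1 + p.2) * L) 0 + max (-(p.1 * L)) 0 + max (-(p.2 * L)) 0 ≤ 1}))
      = (Set.Icc (-c) c).indicator (fun x => ENNReal.ofReal (2 * c - |x|)) x := by
    intro x
    by_cases hx : x ∈ Set.Icc (-c) c
    · have : Prod.mk x ⁻¹' {p : ℝ × ℝ |
        max ((p.1 + p.2) * L) 0 + max (-(p.1 * L)) 0 + max (-(p.2 * L)) 0 ≤ 1}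
          = Set.Icc (-c + max (-x) 0) (c - max x 0) := by
        ext y
        simp only [Set.mem_preimage, Set.mem_setOf_eq, key x y, hx, true_and]
      rw [this, Real.volume_Icc, Set.indicator_of_mem hx]
      congr 1
      have := max_zero_add_max_neg_zero_eq_abs_self x
      linarith
    · have : Prod.mk x ⁻¹' {p : ℝ × ℝ |
        max ((p.1 + p.2) * L) 0 + max (-(p.1 * L)) 0 + max (-(p.2 * L)) 0 ≤ 1}
          = (∅ : Set ℝ) := by
        ext y
        simp only [Set.mem_preimage, Set.mem_setOf_eq, key x y, Set.mem_empty_iff_false,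
          iff_false]
        tauto
      rw [this, measure_empty, Set.indicator_of_notMem hx]
  simp only [hsec]
  rw [lintegral_indicator measurableSet_Icc]
  have hcont : Continuous (fun x : ℝ => 2 * c - |x|) := by fun_prop
  rw [← MeasureTheory.ofReal_integral_eq_lintegral_ofReal
      (hcont.integrableOn_Icc)
      ((ae_restrict_iff' measurableSet_Icc).2 (ae_of_all _ fun x hx => by
        have h1 := abs_le.2 ⟨hx.1, hx.2⟩
        simp only [Pi.zero_apply]
        linarith))]
  congr 1
  rw [MeasureTheory.integral_Icc_eq_integral_Ioc,
    ← intervalIntegral.integral_of_le (by linarith : -c ≤ c)]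
  have hI1 : IntervalIntegrable (fun x : ℝ => 2 * c - |x|) volume (-c) 0 :=
    hcont.intervalIntegrable _ _
  have hI2 : IntervalIntegrable (fun x : ℝ => 2 * c - |x|) volume 0 c :=
    hcont.intervalIntegrable _ _
  rw [← intervalIntegral.integral_add_adjacent_intervals hI1 hI2]
  have e1 : ∫ x in (-c)..0, (2 * c - |x|) = ∫ x in (-c)..0, (2 * c + x) := by
    apply intervalIntegral.integral_congr
    intro x hx
    rw [Set.uIcc_of_le (by linarith : -c ≤ 0)] at hx
    simp only [abs_of_nonpos hx.2]
    ring
  have e2 : ∫ x in (0:ℝ)..c, (2 * c - |x|) = ∫ x in (0:ℝ)..c, (2 * c - x) := by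
    apply intervalIntegral.integral_congr
    intro x hx
    rw [Set.uIcc_of_le hc.le] at hx
    simp only [abs_of_nonneg hx.1]
  rw [e1, e2]
  have v1 : ∫ x in (-c)..0, (2 * c + x) = 3 * c ^ 2 / 2 := by
    rw [intervalIntegral.integral_add (intervalIntegrable_const) (intervalIntegral.intervalIntegrable_id)]
    simp [integral_id]
    ring
  have v2 : ∫ x in (0:ℝ)..c, (2 * c - x) = 3 * c ^ 2 / 2 := by
    rw [intervalIntegral.integral_sub (intervalIntegrable_const) (intervalIntegral.intervalIntegrable_id)]
    simp [integral_id]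
    ring
  rw [v1, v2, hcdef]
  field_simp
  ring
end
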